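/- For d ∈ [0, 1), the set of offers s ∈ S that maximize π(·, H, d) over S is exactly the two-element set {((1+d)/2, (1−d)/2, 0), ((1+d)/2, 0, (1−d)/2)}; in particular the maximal expected payoff equals d + (1−d)²/(4·τ̄). -/

import Mathlib

open MeasureTheory Filter

noncomputable section

/-- The unit simplex of offers `(s_A, s_B, s_C)`. -/
def SimplexS : Set (ℝ × ℝ × ℝ) :=
  {s | 0 ≤ s.1 ∧ 0 ≤ s.2.1 ∧ 0 ≤ s.2.2 ∧ s.1 + s.2.1 + s.2.2 = 1}

/-- Acceptance probability `Λ(b, c, G) = G({(τB, τC) : τB ≤ b or τC ≤ c})`. -/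
def Lam (b c : ℝ) (G : Measure (ℝ × ℝ)) : ℝ :=
  (G {p : ℝ × ℝ | p.1 ≤ b ∨ p.2 ≤ c}).toReal

/-- Joint CDF `G(x, y) = G((−∞, x] × (−∞, y])`. -/
def jointCDF (G : Measure (ℝ × ℝ)) (x y : ℝ) : ℝ :=
  (G (Set.Iic x ×ˢ Set.Iic y)).toReal

/-- Proposer's expected payoff `π(s, G, d) = d + (s_A − d)·Λ(s_B, s_C, G)`. -/
def pay (s : ℝ × ℝ × ℝ) (G : Measure (ℝ × ℝ)) (d : ℝ) : ℝ :=
  d + (s.1 - d) * Lam s.2.1 s.2.2 G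

/-- Modified payoff `π̂(s, G, d) = d + max{s_A − d, 0}·Λ(s_B, s_C, G)`. -/
def payHat (s : ℝ × ℝ × ℝ) (G : Measure (ℝ × ℝ)) (d : ℝ) : ℝ :=
  d + max (s.1 - d) 0 * Lam s.2.1 s.2.2 G

/-- The uniform distribution on `[0, τ]`. -/
def uniformIcc (τ : ℝ) : Measure ℝ :=
  (ENNReal.ofReal τ)⁻¹ • volume.restrict (Set.Icc 0 τ)

/-- Weak convergence of measures: convergence of integrals of all bounded continuous
functions. -/
def WeakLim (Hn : ℕ → Measure (ℝ × ℝ)) (H : Measure (ℝ × ℝ)) : Prop :=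
  ∀ f : BoundedContinuousFunction (ℝ × ℝ) ℝ,
    Tendsto (fun n => ∫ p, f p ∂(Hn n)) atTop (nhds (∫ p, f p ∂H))

lemma aux_uni (τ : ℝ) (hτ : 0 < τ) (b : ℝ) (hb : 0 ≤ b) :
    uniformIcc τ (Set.Iic b) = ENNReal.ofReal (min b τ / τ) := by
  unfold uniformIcc
  rw [Measure.smul_apply, Measure.restrict_apply measurableSet_Iic]
  have h1 : Set.Iic b ∩ Set.Icc 0 τ = Set.Icc 0 (min b τ) := by
    ext x
    simp only [Set.mem_inter_iff, Set.mem_Iic, Set.mem_Icc, le_min_iff]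
    tauto
  rw [h1, Real.volume_Icc, ENNReal.ofReal_div_of_pos hτ, smul_eq_mul, sub_zero,
    div_eq_mul_inv, mul_comm]

lemma aux_fst (τ : ℝ) (H : Measure (ℝ × ℝ)) (hτ : 0 < τ)
    (hmarg1 : H.map Prod.fst = uniformIcc τ) (b : ℝ) (hb : 0 ≤ b) :
    H {p : ℝ × ℝ | p.1 ≤ b} = ENNReal.ofReal (min b τ / τ) := by
  have h0 : {p : ℝ × ℝ | p.1 ≤ b} = Prod.fst ⁻¹' Set.Iic b := rfl
  rw [h0, ← Measure.map_apply measurable_fst measurableSet_Iic, hmarg1,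
    aux_uni τ hτ b hb]

lemma aux_snd (τ : ℝ) (H : Measure (ℝ × ℝ)) (hτ : 0 < τ)
    (hmarg2 : H.map Prod.snd = uniformIcc τ) (c : ℝ) (hc : 0 ≤ c) :
    H {p : ℝ × ℝ | p.2 ≤ c} = ENNReal.ofReal (min c τ / τ) := by
  have h0 : {p : ℝ × ℝ | p.2 ≤ c} = Prod.snd ⁻¹' Set.Iic c := rfl
  rw [h0, ← Measure.map_apply measurable_snd measurableSet_Iic, hmarg2,
    aux_uni τ hτ c hc]

lemma aux_lam (τ : ℝ) (H : Measure (ℝ × ℝ)) [IsProbabilityMeasure H] (hτ : 0 < τ)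
    (hmarg1 : H.map Prod.fst = uniformIcc τ) (hmarg2 : H.map Prod.snd = uniformIcc τ)
    (b c : ℝ) (hb : 0 ≤ b) (hc : 0 ≤ c) :
    Lam b c H = min b τ / τ + min c τ / τ - jointCDF H b c := by
  set A : Set (ℝ × ℝ) := {p : ℝ × ℝ | p.1 ≤ b}
  set B : Set (ℝ × ℝ) := {p : ℝ × ℝ | p.2 ≤ c}
  have hBm : MeasurableSet B := measurable_snd measurableSet_Iic
  have hU : {p : ℝ × ℝ | p.1 ≤ b ∨ p.2 ≤ c} = A ∪ B := rfl
  have hI : A ∩ B = Set.Iic b ×ˢ Set.Iic c := by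
    ext p
    simp only [A, B, Set.mem_inter_iff, Set.mem_setOf_eq, Set.mem_prod, Set.mem_Iic]
  have key : H (A ∪ B) + H (A ∩ B) = H A + H B := measure_union_add_inter A hBm
  have key' := congrArg ENNReal.toReal key
  rw [ENNReal.toReal_add (measure_ne_top H _) (measure_ne_top H _),
    ENNReal.toReal_add (measure_ne_top H _) (measure_ne_top H _)] at key'
  have hA : (H A).toReal = min b τ / τ := by
    rw [aux_fst τ H hτ hmarg1 b hb, ENNReal.toReal_ofReal (by positivity)]
  have hB : (H B).toReal = min c τ / τ := by
    rw [aux_snd τ H hτ hmarg2 c hc, ENNReal.toReal_ofReal (by positivity)]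
  have hJ : (H (A ∩ B)).toReal = jointCDF H b c := by rw [hI]; rfl
  unfold Lam
  rw [hU]
  linarith [key', hA, hB, hJ]

lemma aux_J0 (τ : ℝ) (H : Measure (ℝ × ℝ)) (hτ : 0 < τ)
    (hmarg2 : H.map Prod.snd = uniformIcc τ) (b : ℝ) :
    jointCDF H b 0 = 0 := by
  have hsub : Set.Iic b ×ˢ Set.Iic (0 : ℝ) ⊆ {p : ℝ × ℝ | p.2 ≤ 0} := by
    rintro ⟨x, y⟩ ⟨_, hy⟩; exact hy
  have h2 : H {p : ℝ × ℝ | p.2 ≤ 0} = 0 := by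
    rw [aux_snd τ H hτ hmarg2 0 le_rfl]
    simp [min_eq_left hτ.le]
  have : H (Set.Iic b ×ˢ Set.Iic (0 : ℝ)) = 0 :=
    le_antisymm (h2 ▸ measure_mono hsub) zero_le
  unfold jointCDF
  rw [this, ENNReal.toReal_zero]

lemma aux_J0' (τ : ℝ) (H : Measure (ℝ × ℝ)) (hτ : 0 < τ)
    (hmarg1 : H.map Prod.fst = uniformIcc τ) (c : ℝ) :
    jointCDF H 0 c = 0 := by
  have hsub : Set.Iic (0 : ℝ) ×ˢ Set.Iic c ⊆ {p : ℝ × ℝ | p.1 ≤ 0} := by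
    rintro ⟨x, y⟩ ⟨hx, _⟩; exact hx
  have h2 : H {p : ℝ × ℝ | p.1 ≤ 0} = 0 := by
    rw [aux_fst τ H hτ hmarg1 0 le_rfl]
    simp [min_eq_left hτ.le]
  have : H (Set.Iic (0 : ℝ) ×ˢ Set.Iic c) = 0 :=
    le_antisymm (h2 ▸ measure_mono hsub) zero_le
  unfold jointCDF
  rw [this, ENNReal.toReal_zero]

lemma aux_Jmono (H : Measure (ℝ × ℝ)) [IsProbabilityMeasure H]
    {x y b c : ℝ} (hx : x ≤ b) (hy : y ≤ c) :
    jointCDF H x y ≤ jointCDF H b c := by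
  apply ENNReal.toReal_mono (measure_ne_top H _)
  exact measure_mono (Set.prod_mono (Set.Iic_subset_Iic.2 hx) (Set.Iic_subset_Iic.2 hy))

set_option maxHeartbeats 2000000 in
theorem stmt3
    (τ : ℝ) (hτ : 1 / 2 ≤ τ)
    (H : Measure (ℝ × ℝ)) (hHprob : IsProbabilityMeasure H)
    (hconc : H ((Set.Icc (0 : ℝ) τ ×ˢ Set.Icc (0 : ℝ) τ)ᶜ) = 0)
    (hmarg1 : H.map Prod.fst = uniformIcc τ)
    (hmarg2 : H.map Prod.snd = uniformIcc τ)
    (hA1 : ∀ x > (0 : ℝ), 0 < jointCDF H x x)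
    (d : ℝ) (hd0 : 0 ≤ d) (hd1 : d < 1) :
    {s : ℝ × ℝ × ℝ | s ∈ SimplexS ∧ ∀ s' ∈ SimplexS, pay s' H d ≤ pay s H d} =
      {((1 + d) / 2, (1 - d) / 2, 0), ((1 + d) / 2, 0, (1 - d) / 2)} ∧
    pay ((1 + d) / 2, (1 - d) / 2, 0) H d = d + (1 - d) ^ 2 / (4 * τ) := by
  have hτ0 : (0 : ℝ) < τ := lt_of_lt_of_le (by norm_num) hτ
  have hd' : (0 : ℝ) < 1 - d := by linarith
  set M : ℝ := d + (1 - d) ^ 2 / (4 * τ) with hM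
  have hv1 : pay ((1 + d) / 2, (1 - d) / 2, 0) H d = M := by
    show d + ((1 + d) / 2 - d) * Lam ((1 - d) / 2) 0 H = M
    rw [aux_lam τ H hτ0 hmarg1 hmarg2 _ _ (by linarith) le_rfl,
      aux_J0 τ H hτ0 hmarg2, min_eq_left (show (1 - d) / 2 ≤ τ by linarith),
      min_eq_left hτ0.le, hM]
    field_simp
    ring
  have hv2 : pay ((1 + d) / 2, 0, (1 - d) / 2) H d = M := by
    show d + ((1 + d) / 2 - d) * Lam 0 ((1 - d) / 2) H = M
    rw [aux_lam τ H hτ0 hmarg1 hmarg2 _ _ le_rfl (by linarith),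
      aux_J0' τ H hτ0 hmarg1, min_eq_left hτ0.le,
      min_eq_left (show (1 - d) / 2 ≤ τ by linarith), hM]
    field_simp
    ring
  have hS1 : ((1 + d) / 2, (1 - d) / 2, (0 : ℝ)) ∈ SimplexS :=
    ⟨by linarith, by linarith, le_rfl, by ring⟩
  have hS2 : ((1 + d) / 2, (0 : ℝ), (1 - d) / 2) ∈ SimplexS :=
    ⟨by linarith, le_rfl, by linarith, by ring⟩
  have hMd : d < M := by
    have h0 : (0 : ℝ) < (1 - d) ^ 2 / (4 * τ) :=
      div_pos (pow_pos hd' 2) (by linarith)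
    rw [hM]
    linarith
  have upper : ∀ s ∈ SimplexS, pay s H d ≤ M := by
    rintro ⟨a, b, c⟩ ⟨ha, hb, hc, hsum⟩
    have hL0 : (0 : ℝ) ≤ Lam b c H := ENNReal.toReal_nonneg
    have hLe : Lam b c H ≤ (b + c) / τ := by
      rw [aux_lam τ H hτ0 hmarg1 hmarg2 b c hb hc]
      have hJ : 0 ≤ jointCDF H b c := ENNReal.toReal_nonneg
      have h1 : min b τ / τ ≤ b / τ := by gcongr; exact min_le_left _ _
      have h2 : min c τ / τ ≤ c / τ := by gcongr; exact min_le_left _ _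
      have h3 : (b + c) / τ = b / τ + c / τ := add_div b c τ
      linarith
    show d + (a - d) * Lam b c H ≤ M
    by_cases had : a ≤ d
    · nlinarith [hMd, mul_nonneg (by linarith : (0:ℝ) ≤ d - a) hL0]
    · push_neg at had
      have h2 : (a - d) * Lam b c H ≤ (a - d) * ((b + c) / τ) :=
        mul_le_mul_of_nonneg_left hLe (by linarith)
      have hbc : b + c = 1 - a := by linarith
      rw [hbc] at h2
      have h4 : (a - d) * ((1 - a) / τ) ≤ (1 - d) ^ 2 / (4 * τ) := by
        rw [← mul_div_assoc, div_le_div_iff₀ hτ0 (by linarith : (0:ℝ) < 4 * τ)]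
        nlinarith [mul_nonneg hτ0.le (sq_nonneg (2 * a - 1 - d))]
      rw [hM]
      linarith
  have char : ∀ a b c : ℝ, (a, b, c) ∈ SimplexS → pay (a, b, c) H d = M →
      (a, b, c) = ((1 + d) / 2, (1 - d) / 2, (0 : ℝ)) ∨
      (a, b, c) = ((1 + d) / 2, (0 : ℝ), (1 - d) / 2) := by
    rintro a b c ⟨ha, hb, hc, hsum⟩ heq
    have heq' : d + (a - d) * Lam b c H = M := heq
    have hL0 : (0 : ℝ) ≤ Lam b c H := ENNReal.toReal_nonneg
    have had : d < a := by
      by_contra hcon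
      push_neg at hcon
      nlinarith [hMd, mul_nonneg (by linarith : (0:ℝ) ≤ d - a) hL0]
    have hLe : Lam b c H ≤ (1 - a) / τ := by
      rw [aux_lam τ H hτ0 hmarg1 hmarg2 b c hb hc]
      have hJ : 0 ≤ jointCDF H b c := ENNReal.toReal_nonneg
      have h1 : min b τ / τ ≤ b / τ := by gcongr; exact min_le_left _ _
      have h2 : min c τ / τ ≤ c / τ := by gcongr; exact min_le_left _ _
      have h3 : (1 - a) / τ = b / τ + c / τ := by
        rw [← add_div]
        congr 1
        linarith
      linarith
    have h5 : (a - d) * Lam b c H = (1 - d) ^ 2 / (4 * τ) := by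
      rw [hM] at heq'
      linarith
    have hA : a = (1 + d) / 2 := by
      have h6 : (a - d) * Lam b c H ≤ (a - d) * ((1 - a) / τ) :=
        mul_le_mul_of_nonneg_left hLe (by linarith)
      have h6' : (1 - d) ^ 2 / (4 * τ) ≤ (a - d) * (1 - a) / τ := by
        rw [mul_div_assoc]
        linarith
      rw [div_le_div_iff₀ (by linarith : (0:ℝ) < 4 * τ) hτ0] at h6'
      have hsq : (2 * a - 1 - d) ^ 2 ≤ 0 := by nlinarith [hτ0]
      have hsq0 : (2 * a - 1 - d) ^ 2 = 0 := le_antisymm hsq (sq_nonneg _)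
      have := (pow_eq_zero_iff two_ne_zero).mp hsq0
      linarith
    have hbc2 : b + c = (1 - d) / 2 := by
      rw [hA] at hsum
      linarith
    have hbτ : b ≤ τ := by linarith
    have hcτ : c ≤ τ := by linarith
    have hLsum : Lam b c H = (1 - d) / (2 * τ) - jointCDF H b c := by
      rw [aux_lam τ H hτ0 hmarg1 hmarg2 b c hb hc, min_eq_left hbτ, min_eq_left hcτ,
        ← add_div, hbc2, div_div]
    have key : (a - d) * ((1 - d) / (2 * τ) - jointCDF H b c) = (1 - d) ^ 2 / (4 * τ) := by
      rw [← hLsum]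
      exact h5
    rw [hA] at key
    have key2 : ((1 + d) / 2 - d) * ((1 - d) / (2 * τ)) -
        ((1 + d) / 2 - d) * jointCDF H b c = (1 - d) ^ 2 / (4 * τ) := by
      rw [← mul_sub]
      exact key
    have key3 : ((1 + d) / 2 - d) * jointCDF H b c = 0 := by
      have : ((1 + d) / 2 - d) * ((1 - d) / (2 * τ)) = (1 - d) ^ 2 / (4 * τ) := by
        field_simp
        ring
      linarith
    have hne : (1 + d) / 2 - d ≠ 0 := by intro h; linarith
    have hJ0 : jointCDF H b c = 0 := (mul_eq_zero.mp key3).resolve_left hne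
    have hbc0 : b = 0 ∨ c = 0 := by
      by_contra hcon
      push_neg at hcon
      obtain ⟨hbne, hcne⟩ := hcon
      have hbpos : 0 < b := lt_of_le_of_ne hb (Ne.symm hbne)
      have hcpos : 0 < c := lt_of_le_of_ne hc (Ne.symm hcne)
      have hx := hA1 (min b c) (lt_min hbpos hcpos)
      have hmono := aux_Jmono H (min_le_left b c) (min_le_right b c)
      linarith
    rcases hbc0 with h0 | h0
    · right
      rw [Prod.mk.injEq, Prod.mk.injEq]
      exact ⟨hA, h0, by linarith⟩
    · left
      rw [Prod.mk.injEq, Prod.mk.injEq]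
      exact ⟨hA, by linarith, h0⟩
  refine ⟨?_, hv1⟩
  ext s
  obtain ⟨a, b, c⟩ := s
  simp only [Set.mem_setOf_eq, Set.mem_insert_iff, Set.mem_singleton_iff]
  constructor
  · rintro ⟨hsS, hmax⟩
    have h1 : M ≤ pay (a, b, c) H d := hv1 ▸ hmax _ hS1
    have h2 : pay (a, b, c) H d ≤ M := upper _ hsS
    exact char a b c hsS (le_antisymm h2 h1)
  · rintro (h | h) <;> rw [h]
    · exact ⟨hS1, fun s' hs' => by rw [hv1]; exact upper s' hs'⟩
    · exact ⟨hS2, fun s' hs' => by rw [hv2]; exact upper s' hs'⟩
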